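/- arXiv:1512.08341 — 7 statements merged into one kernel-verified Lean document; each statement's English description precedes it below -/
import Mathlib

section
/- Let a, b be integers, not both zero, and define a' = b - max(0, max(b,0) - a) and b' = max(b,0) - a. Then gcd(a', b') = gcd(a, b). -/
lemma hsub (x y : ℤ) : Int.gcd (x - y) y = Int.gcd x y := by
  apply Nat.dvd_antisymm
  · apply Int.natCast_dvd_natCast.mp
    refine Int.dvd_coe_gcd ?_ (Int.gcd_dvd_right _ _)
    have : (↑((x - y).gcd y) : ℤ) ∣ (x - y) + y := dvd_add (Int.gcd_dvd_left _ _) (Int.gcd_dvd_right _ _)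
    simpa using this
  · apply Int.natCast_dvd_natCast.mp
    exact Int.dvd_coe_gcd (dvd_sub (Int.gcd_dvd_left _ _) (Int.gcd_dvd_right _ _)) (Int.gcd_dvd_right _ _)

lemma hadd (x y : ℤ) : Int.gcd (x + y) y = Int.gcd x y := by
  have := hsub (x + y) y; simpa using this.symm

lemma hneg (x y : ℤ) : Int.gcd x (-y) = Int.gcd x y := by
  simp [Int.gcd]

theorem stmt_0 (a b : ℤ) (h : ¬(a = 0 ∧ b = 0)) :
    Int.gcd (b - max 0 (max b 0 - a)) (max b 0 - a) = Int.gcd a b := by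
  rcases le_total b 0 with hb | hb
  · rw [max_eq_right hb]
    rcases le_total a 0 with ha | ha
    · rw [max_eq_right (by omega : (0:ℤ) ≤ 0 - a),
        show b - (0 - a) = b + a by ring, show (0:ℤ) - a = -a by ring,
        hneg, show b + a = a + b by ring, Int.gcd_comm a b, ← hadd b a,
        show b + a = a + b by ring]
    · rw [max_eq_left (by omega : (0:ℤ) - a ≤ 0), sub_zero,
        show (0:ℤ) - a = -a by ring, hneg, Int.gcd_comm]
  · rw [max_eq_left hb]
    rcases le_total a b with ha | ha
    · rw [max_eq_right (by omega : (0:ℤ) ≤ b - a),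
        show b - (b - a) = a by ring, Int.gcd_comm a (b - a), hsub, Int.gcd_comm]
    · rw [max_eq_left (by omega : b - a ≤ 0), sub_zero,
        show b - a = -(a - b) by ring, hneg, Int.gcd_comm b (a - b), hsub]
end

section
/- Let a, b be integers, not both zero, and define a'' = max(0, a + max(b,0)) - b and b'' = a + max(b,0). Then gcd(a'', b'') = gcd(a, b). -/
lemma g1 (a b : ℤ) : Int.gcd (a + b) b = Int.gcd a b := by
  have h1 : ∀ x y : ℤ, Int.gcd (x + y) y ∣ Int.gcd x y := by
    intro x y
    rw [← Int.natCast_dvd_natCast]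
    apply Int.dvd_coe_gcd
    · have h2 : ((x+y).gcd y : ℤ) ∣ (x + y) - y :=
        dvd_sub (Int.gcd_dvd_left _ _) (Int.gcd_dvd_right _ _)
      simpa using h2
    · exact Int.gcd_dvd_right _ _
  apply Nat.dvd_antisymm (h1 a b)
  have := h1 (a + b) (-b)
  simp only [add_neg_cancel_right, Int.gcd] at this ⊢
  simpa using this

lemma gneg (a b : ℤ) : Int.gcd (-a) b = Int.gcd a b := by
  simp [Int.gcd]

theorem stmt_2 (a b : ℤ) (h : ¬(a = 0 ∧ b = 0)) :
    Int.gcd (max 0 (a + max b 0) - b) (a + max b 0) = Int.gcd a b := by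
  rcases le_or_gt 0 b with hb | hb
  · rw [max_eq_left hb]
    rcases le_or_gt 0 (a + b) with hab | hab
    · rw [max_eq_right hab, add_sub_cancel_right, Int.gcd_comm, add_comm, g1,
        Int.gcd_comm]
    · rw [max_eq_left hab.le, zero_sub, gneg, Int.gcd_comm, g1]
  · rw [max_eq_right hb.le, add_zero]
    rcases le_or_gt 0 a with ha | ha
    · rw [max_eq_right ha]
      have : a - b = -b + a := by ring
      rw [this, g1, gneg, Int.gcd_comm]
    · rw [max_eq_left ha.le, zero_sub, gneg, Int.gcd_comm]
end

section
/- The map on ℤ² \ {0} sending (a,b) to (b - max(0, max(b,0) - a), max(b,0) - a) is a bijection from ℤ² \ {0} to itself, with inverse (a,b) ↦ (max(0, a + max(b,0)) - b, a + max(b,0)). -/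
theorem stmt_4
    (f g : ℤ × ℤ → ℤ × ℤ)
    (hf : ∀ p : ℤ × ℤ, f p = (p.2 - max 0 (max p.2 0 - p.1), max p.2 0 - p.1))
    (hg : ∀ p : ℤ × ℤ, g p = (max 0 (p.1 + max p.2 0) - p.2, p.1 + max p.2 0)) :
    (∀ p : ℤ × ℤ, p ≠ 0 → f p ≠ 0) ∧
    (∀ p : ℤ × ℤ, p ≠ 0 → g p ≠ 0) ∧
    (∀ p : ℤ × ℤ, p ≠ 0 → g (f p) = p) ∧
    (∀ p : ℤ × ℤ, p ≠ 0 → f (g p) = p) := by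
  refine ⟨?_, ?_, ?_, ?_⟩ <;> rintro ⟨a, b⟩ hp <;>
    simp only [hf, hg, Ne, Prod.ext_iff, Prod.mk.injEq, Prod.fst_zero, Prod.snd_zero,
      not_and] at * <;> omega
end

section
/- Let n ≥ 3 and (a; b) ∈ ℤ^{2n-4}, and define α_j via equations (2) and (3) of the paper. Then α_j ≥ 0 for all 1 ≤ j ≤ 2n-4. -/
theorem stmt_11 (n : ℕ) (hn : 3 ≤ n) (a b β α : ℕ → ℤ)
    (hβ : ∀ i, β i =
      2 * (Finset.Icc 1 (n - 2)).sup' (Finset.nonempty_Icc.mpr (by omega))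
            (fun k => |a k| + max (b k) 0 + ∑ j ∈ Finset.Icc 1 (k - 1), b j)
        - 2 * ∑ j ∈ Finset.Icc 1 (i - 1), b j)
    (hα : ∀ j ∈ Finset.Icc 1 (2 * n - 4),
      (0 ≤ b ((j + 1) / 2) →
        α j = (-1) ^ j * a ((j + 1) / 2) + β ((j + 1) / 2) / 2) ∧
      (b ((j + 1) / 2) ≤ 0 →
        α j = (-1) ^ j * a ((j + 1) / 2) + β (1 + (j + 1) / 2) / 2)) :
    ∀ j ∈ Finset.Icc 1 (2 * n - 4), 0 ≤ α j := by
  set M := (Finset.Icc 1 (n - 2)).sup' (Finset.nonempty_Icc.mpr (by omega))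
      (fun k => |a k| + max (b k) 0 + ∑ j ∈ Finset.Icc 1 (k - 1), b j) with hM
  intro j hj
  obtain ⟨h1, h2⟩ := hα j hj
  rw [Finset.mem_Icc] at hj
  set k := (j + 1) / 2 with hkdef
  have hk : k ∈ Finset.Icc 1 (n - 2) := by rw [Finset.mem_Icc]; omega
  have hle : |a k| + max (b k) 0 + ∑ i ∈ Finset.Icc 1 (k - 1), b i ≤ M :=
    Finset.le_sup' (fun k => |a k| + max (b k) 0 + ∑ j ∈ Finset.Icc 1 (k - 1), b j) hk
  have habs : |(-1 : ℤ) ^ j * a k| = |a k| := by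
    rw [abs_mul, abs_pow, abs_neg, abs_one, one_pow, one_mul]
  have hna : -|a k| ≤ (-1 : ℤ) ^ j * a k := by
    have := neg_abs_le ((-1 : ℤ) ^ j * a k); rwa [habs] at this
  rcases le_or_gt 0 (b k) with hb | hb
  · rw [h1 hb, hβ k]
    have hdiv : (2 * M - 2 * ∑ i ∈ Finset.Icc 1 (k - 1), b i) / 2
        = M - ∑ i ∈ Finset.Icc 1 (k - 1), b i := by
      rw [show 2 * M - 2 * ∑ i ∈ Finset.Icc 1 (k - 1), b i
          = 2 * (M - ∑ i ∈ Finset.Icc 1 (k - 1), b i) by ring,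
        Int.mul_ediv_cancel_left _ two_ne_zero]
    rw [hdiv]
    have hbm : (0 : ℤ) ≤ max (b k) 0 := le_max_right _ _
    linarith
  · rw [h2 hb.le, hβ (1 + k)]
    have hk1 : 1 + k - 1 = k := by omega
    rw [hk1]
    have hsum : ∑ i ∈ Finset.Icc 1 k, b i
        = ∑ i ∈ Finset.Icc 1 (k - 1), b i + b k := by
      have hk1' : k - 1 + 1 = k := by omega
      rw [← hk1', Finset.sum_Icc_succ_top (by omega), hk1']
    have hdiv : (2 * M - 2 * ∑ i ∈ Finset.Icc 1 k, b i) / 2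
        = M - ∑ i ∈ Finset.Icc 1 k, b i := by
      rw [show 2 * M - 2 * ∑ i ∈ Finset.Icc 1 k, b i
          = 2 * (M - ∑ i ∈ Finset.Icc 1 k, b i) by ring,
        Int.mul_ediv_cancel_left _ two_ne_zero]
    rw [hdiv, hsum]
    have hbm : max (b k) 0 = 0 := max_eq_right hb.le
    rw [hbm] at hle
    linarith
end

section
/- Define the extended coordinates of (a₁,…,a_{n-2}; b₁,…,b_{n-2}) ∈ ℤ^{2n-4} by a₀ = a_{n-1} = 0, b₀ = -max_{1≤k≤n-2}(|a_k| + b_k⁺ + Σ_{j=1}^{k-1} b_j), and b_{n-1} = -b₀ - Σ_{j=1}^{n-2} b_j. Then Σ_{i=0}^{n-1}(|a_i| + |b_i|) ≤ 4·Σ_{i=1}^{n-2}(|a_i| + |b_i|). -/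
theorem stmt_12 (n : ℕ) (hn : 3 ≤ n) (a b : ℕ → ℤ)
    (ha0 : a 0 = 0) (han : a (n - 1) = 0)
    (hb0 : b 0 = - (Finset.Icc 1 (n - 2)).sup' (Finset.nonempty_Icc.mpr (by omega))
            (fun k => |a k| + max (b k) 0 + ∑ j ∈ Finset.Icc 1 (k - 1), b j))
    (hbn : b (n - 1) = - b 0 - ∑ j ∈ Finset.Icc 1 (n - 2), b j) :
    ∑ i ∈ Finset.range n, (|a i| + |b i|) ≤
      4 * ∑ i ∈ Finset.Icc 1 (n - 2), (|a i| + |b i|) := by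
  set M := ∑ i ∈ Finset.Icc 1 (n - 2), (|a i| + |b i|) with hM
  have hterm : ∀ i : ℕ, (0:ℤ) ≤ |a i| + |b i| := fun i => by positivity
  -- sup' ≤ M
  have hsup_le : (Finset.Icc 1 (n - 2)).sup' (Finset.nonempty_Icc.mpr (by omega))
      (fun k => |a k| + max (b k) 0 + ∑ j ∈ Finset.Icc 1 (k - 1), b j) ≤ M := by
    apply Finset.sup'_le
    intro k hk
    rw [Finset.mem_Icc] at hk
    obtain ⟨hk1, hk2⟩ := hk
    obtain ⟨m, rfl⟩ : ∃ m, k = m + 1 := ⟨k - 1, by omega⟩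
    have hsub : ∑ j ∈ Finset.Icc 1 (m + 1 - 1), b j ≤
        ∑ j ∈ Finset.Icc 1 (m + 1 - 1), (|a j| + |b j|) := by
      apply Finset.sum_le_sum
      intro j _
      have := abs_nonneg (a j)
      have := le_abs_self (b j)
      linarith
    have hmax : max (b (m+1)) 0 ≤ |b (m+1)| := by
      rcases le_or_gt (b (m+1)) 0 with h | h
      · simp [max_eq_right h, abs_nonneg]
      · rw [max_eq_left h.le]; exact le_abs_self _
    have hsplit : ∑ j ∈ Finset.Icc 1 (m + 1), (|a j| + |b j|) =
        ∑ j ∈ Finset.Icc 1 m, (|a j| + |b j|) + (|a (m+1)| + |b (m+1)|) :=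
      Finset.sum_Icc_succ_top (by omega) _
    have hsubset : ∑ j ∈ Finset.Icc 1 (m + 1), (|a j| + |b j|) ≤ M := by
      apply Finset.sum_le_sum_of_subset_of_nonneg
      · exact Finset.Icc_subset_Icc le_rfl (by omega)
      · intro i _ _; exact hterm i
    simp only [Nat.add_sub_cancel] at hsub ⊢
    linarith
  -- sup' ≥ 0
  have hsup_nonneg : (0:ℤ) ≤ (Finset.Icc 1 (n - 2)).sup' (Finset.nonempty_Icc.mpr (by omega))
      (fun k => |a k| + max (b k) 0 + ∑ j ∈ Finset.Icc 1 (k - 1), b j) := by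
    have h1 : (1:ℕ) ∈ Finset.Icc 1 (n - 2) := Finset.mem_Icc.mpr ⟨le_rfl, by omega⟩
    have := Finset.le_sup' (f := fun k => |a k| + max (b k) 0 + ∑ j ∈ Finset.Icc 1 (k - 1), b j) h1
    refine le_trans ?_ this
    simp only [Nat.sub_self, Finset.Icc_eq_empty_of_lt (by norm_num : (1:ℕ) > 0),
      Finset.sum_empty]
    have := abs_nonneg (a 1)
    have : (0:ℤ) ≤ max (b 1) 0 := le_max_right _ _
    positivity
  have hb0abs : |b 0| ≤ M := by
    rw [hb0, abs_neg, abs_of_nonneg hsup_nonneg]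
    exact hsup_le
  have hsumabs : |∑ j ∈ Finset.Icc 1 (n - 2), b j| ≤ M := by
    refine le_trans (Finset.abs_sum_le_sum_abs _ _) ?_
    apply Finset.sum_le_sum
    intro j _
    have := abs_nonneg (a j)
    linarith
  have hbnabs : |b (n - 1)| ≤ 2 * M := by
    rw [hbn]
    have : -b 0 - ∑ j ∈ Finset.Icc 1 (n - 2), b j = -(b 0 + ∑ j ∈ Finset.Icc 1 (n - 2), b j) := by
      ring
    rw [this, abs_neg]
    calc |b 0 + ∑ j ∈ Finset.Icc 1 (n - 2), b j| ≤ |b 0| + |∑ j ∈ Finset.Icc 1 (n - 2), b j| :=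
          abs_add_le _ _
      _ ≤ 2 * M := by linarith
  -- decompose the range sum
  have hrange : Finset.range n = insert 0 (insert (n - 1) (Finset.Icc 1 (n - 2))) := by
    ext i
    simp only [Finset.mem_range, Finset.mem_insert, Finset.mem_Icc]
    omega
  have h0ni : (0:ℕ) ∉ insert (n - 1) (Finset.Icc 1 (n - 2)) := by
    simp only [Finset.mem_insert, Finset.mem_Icc]
    omega
  have hn1ni : (n - 1) ∉ Finset.Icc 1 (n - 2) := by
    simp only [Finset.mem_Icc]
    omega
  rw [hrange, Finset.sum_insert h0ni, Finset.sum_insert hn1ni, ha0, han]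
  simp only [abs_zero, zero_add]
  linarith
end

section
/- Let a_{i-1}, a_i, b_{i-1}, b_i be integers with b_{i-1} < 0 < b_i and 0 < a_{i-1} - a_i < b_i - b_{i-1}. Then the σ_i⁻¹ update rules (equation (7)) give b'_{i-1} = b_{i-1} + (a_{i-1} - a_i) and b'_i = b_i - (a_{i-1} - a_i), and moreover |b'_{i-1}| + |b'_i| < |b_{i-1}| + |b_i|. -/
theorem stmt_16 (a₁ a₂ b₁ b₂ : ℤ) (hb₁ : b₁ < 0) (hb₂ : 0 < b₂)
    (ha : 0 < a₁ - a₂) (hab : a₁ - a₂ < b₂ - b₁) :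
    -a₂ + b₁ + b₂ - max (-a₁ + max b₁ 0 + max b₂ 0) (-a₂ + b₁) = b₁ + (a₁ - a₂) ∧
    a₂ + max (max b₁ 0 + max b₂ 0 - a₁) (b₁ - a₂) = b₂ - (a₁ - a₂) ∧
    |b₁ + (a₁ - a₂)| + |b₂ - (a₁ - a₂)| < |b₁| + |b₂| := by
  simp only [max_def, abs]
  split <;> split <;> split <;> split <;> omega
end

section
/- Let a_{i-1}, a_i, b_{i-1}, b_i be integers with b_{i-1} < 0 < b_i and 0 < a_i - a_{i-1} < b_i - b_{i-1}. Then the σ_i update rules (equation (4)) give b'_{i-1} = b_{i-1} + (a_i - a_{i-1}) and b'_i = b_i - (a_i - a_{i-1}), a'_{i-1} = max(a_{i-1}, a_i + b_{i-1}), a'_i = min(a_i, a_{i-1} + b_i), and |b'_{i-1}| + |b'_i| < |b_{i-1}| + |b_i|. -/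
theorem stmt_17 (a₁ a₂ b₁ b₂ : ℤ) (hb₁ : b₁ < 0) (hb₂ : 0 < b₂)
    (ha : 0 < a₂ - a₁) (hab : a₂ - a₁ < b₂ - b₁) :
    a₂ + b₁ + b₂ - max (a₁ + max b₁ 0 + max b₂ 0) (a₂ + b₁) = b₁ + (a₂ - a₁) ∧
    max (a₁ + max b₁ 0 + max b₂ 0) (a₂ + b₁) - a₂ = b₂ - (a₂ - a₁) ∧
    max (a₁ + max b₁ 0) (a₂ + b₁) = max a₁ (a₂ + b₁) ∧
    b₂ - max (-a₁) (max b₂ 0 - a₂) = min a₂ (a₁ + b₂) ∧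
    |b₁ + (a₂ - a₁)| + |b₂ - (a₂ - a₁)| < |b₁| + |b₂| := by
  constructor
  · omega
  constructor
  · omega
  constructor
  · omega
  constructor
  · omega
  · rw [abs_of_neg hb₁, abs_of_pos hb₂]
    rcases le_or_gt 0 (b₁ + (a₂ - a₁)) with h | h <;> rcases le_or_gt 0 (b₂ - (a₂ - a₁)) with h2 | h2 <;>
      simp [abs_of_nonneg, abs_of_neg, *] <;> (rcases abs_cases (b₂ - (a₂ - a₁)) with ⟨_, _⟩ | ⟨_, _⟩ <;> omega)
end
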